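/- Let X be a skew brace with operations x ▷ y = y^∘ ∘ (x * y) and x ◁ y = y^∘ ∘ (y * x). Then for all x, y, z ∈ X the second exchange law holds: (x ▷ y) ◁ (z ▷ y) = (x ◁ z) ▷ (y ◁ z). -/
import Mathlib


structure SkewBrace (X : Type*) where
  circ : X → X → X
  cinv : X → X
  ce : X
  star : X → X → X
  sinv : X → X
  se : X
  circ_assoc : ∀ a b c, circ (circ a b) c = circ a (circ b c)
  ce_circ : ∀ a, circ ce a = a
  circ_ce : ∀ a, circ a ce = a
  cinv_circ : ∀ a, circ (cinv a) a = ce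
  circ_cinv : ∀ a, circ a (cinv a) = ce
  star_assoc : ∀ a b c, star (star a b) c = star a (star b c)
  se_star : ∀ a, star se a = a
  star_se : ∀ a, star a se = a
  sinv_star : ∀ a, star (sinv a) a = se
  star_sinv : ∀ a, star a (sinv a) = se
  distrib : ∀ x y z, circ x (star y z) = star (star (circ x y) (sinv x)) (circ x z)

def SkewBrace.tri {X : Type*} (B : SkewBrace X) (x y : X) : X :=
  B.circ (B.cinv y) (B.star x y)

def SkewBrace.ov {X : Type*} (B : SkewBrace X) (x y : X) : X :=
  B.circ (B.cinv y) (B.star y x)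

def SkewBrace.triInv {X : Type*} (B : SkewBrace X) (x y : X) : X :=
  B.star (B.circ y x) (B.sinv y)

def SkewBrace.ovInv {X : Type*} (B : SkewBrace X) (x y : X) : X :=
  B.star (B.sinv y) (B.circ y x)
namespace SkewBrace

variable {X : Type*} (B : SkewBrace X)

/-! ### star group basics -/

lemma star_sinv_cancel_left (a b : X) : B.star a (B.star (B.sinv a) b) = b := by
  rw [← B.star_assoc, B.star_sinv, B.se_star]

lemma sinv_star_cancel_left (a b : X) : B.star (B.sinv a) (B.star a b) = b := by
  rw [← B.star_assoc, B.sinv_star, B.se_star]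

lemma sinv_unique {a b : X} (h : B.star a b = B.se) : b = B.sinv a := by
  have h2 := congrArg (B.star (B.sinv a)) h
  rwa [B.sinv_star_cancel_left, B.star_se] at h2

lemma sinv_sinv (a : X) : B.sinv (B.sinv a) = a := (B.sinv_unique (B.sinv_star a)).symm

lemma sinv_se : B.sinv B.se = B.se := (B.sinv_unique (B.se_star B.se)).symm

lemma sinv_star' (a b : X) : B.sinv (B.star a b) = B.star (B.sinv b) (B.sinv a) := by
  symm; apply B.sinv_unique
  rw [B.star_assoc, B.star_sinv_cancel_left, B.star_sinv]

lemma star_left_cancel {a b c : X} (h : B.star a b = B.star a c) : b = c := by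
  have h2 := congrArg (B.star (B.sinv a)) h
  rwa [B.sinv_star_cancel_left, B.sinv_star_cancel_left] at h2

/-! ### circ group basics -/

lemma circ_cinv_cancel_left (a b : X) : B.circ a (B.circ (B.cinv a) b) = b := by
  rw [← B.circ_assoc, B.circ_cinv, B.ce_circ]

lemma cinv_circ_cancel_left (a b : X) : B.circ (B.cinv a) (B.circ a b) = b := by
  rw [← B.circ_assoc, B.cinv_circ, B.ce_circ]

lemma cinv_unique {a b : X} (h : B.circ a b = B.ce) : b = B.cinv a := by
  have h2 := congrArg (B.circ (B.cinv a)) h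
  rwa [B.cinv_circ_cancel_left, B.circ_ce] at h2

lemma cinv_cinv (a : X) : B.cinv (B.cinv a) = a := (B.cinv_unique (B.cinv_circ a)).symm

lemma cinv_circ' (a b : X) : B.cinv (B.circ a b) = B.circ (B.cinv b) (B.cinv a) := by
  symm; apply B.cinv_unique
  rw [B.circ_assoc, B.circ_cinv_cancel_left, B.circ_cinv]

/-! ### the two identities coincide -/

lemma circ_se (a : X) : B.circ a B.se = a := by
  have h := B.distrib a B.se B.se
  rw [B.se_star, B.star_assoc] at h
  have h2 : B.star (B.circ a B.se) B.se
      = B.star (B.circ a B.se) (B.star (B.sinv a) (B.circ a B.se)) := by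
    rw [B.star_se]; exact h
  have h3 := B.star_left_cancel h2
  have h4 := congrArg (B.star a) h3
  rw [B.star_se, B.star_sinv_cancel_left] at h4
  exact h4.symm

lemma se_eq_ce : B.se = B.ce := by
  have h1 := B.circ_se B.ce
  have h2 := B.ce_circ B.se
  rw [h2] at h1; exact h1

/-! ### the lambda map -/

def lam (a b : X) : X := B.star (B.sinv a) (B.circ a b)

lemma circ_eq_star_lam (a b : X) : B.circ a b = B.star a (B.lam a b) := by
  rw [lam, B.star_sinv_cancel_left]

lemma lam_star (a b c : X) :
    B.lam a (B.star b c) = B.star (B.lam a b) (B.lam a c) := by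
  simp only [lam, B.distrib, B.star_assoc]

lemma lam_se (a : X) : B.lam a B.se = B.se := by
  rw [lam, B.circ_se, B.sinv_star]

lemma lam_sinv (a b : X) : B.lam a (B.sinv b) = B.sinv (B.lam a b) := by
  apply B.sinv_unique
  rw [← B.lam_star, B.star_sinv, B.lam_se]

lemma circ_sinv (a b : X) :
    B.circ a (B.sinv b) = B.star (B.star a (B.sinv (B.circ a b))) a := by
  have h := B.distrib a b (B.sinv b)
  rw [B.star_sinv, B.circ_se] at h
  -- h : a = ((a∘b) ⋆ sinv a) ⋆ (a ∘ sinv b)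
  have h2 := congrArg (B.star (B.sinv (B.star (B.circ a b) (B.sinv a)))) h.symm
  rw [B.sinv_star_cancel_left, B.sinv_star', B.sinv_sinv] at h2
  -- h2 : a ∘ sinv b = (a ⋆ sinv (a∘b)) ⋆ a
  rw [h2]

lemma lam_circ (a b c : X) : B.lam (B.circ a b) c = B.lam a (B.lam b c) := by
  simp only [lam, B.distrib, B.circ_sinv, ← B.circ_assoc]
  simp only [B.star_assoc, B.sinv_star_cancel_left, B.star_sinv_cancel_left]

lemma lam_ce (a : X) : B.lam B.ce a = a := by
  rw [lam, B.ce_circ, ← B.se_eq_ce, B.sinv_se, B.se_star]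

lemma lam_cancel (a b : X) : B.lam a (B.lam (B.cinv a) b) = b := by
  rw [← B.lam_circ, B.circ_cinv, B.lam_ce]

lemma lam_self_cinv (a : X) : B.lam a (B.cinv a) = B.sinv a := by
  rw [lam, B.circ_cinv, ← B.se_eq_ce, B.star_se]

lemma lam_cinv_self (a : X) : B.lam (B.cinv a) a = B.sinv (B.cinv a) := by
  rw [lam, B.cinv_circ, ← B.se_eq_ce, B.star_se]

/-! ### expressing tri and ov via lam -/

lemma ov_eq (x y : X) : B.ov x y = B.lam (B.cinv y) x := by
  rw [ov, lam, B.distrib, B.cinv_circ, ← B.se_eq_ce, B.se_star]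

lemma tri_eq (x y : X) :
    B.tri x y = B.star (B.star (B.cinv y) (B.lam (B.cinv y) x)) (B.sinv (B.cinv y)) := by
  rw [tri, B.distrib, B.cinv_circ, ← B.se_eq_ce, B.star_se, B.circ_eq_star_lam]

lemma cinv_tri (z y : X) : B.cinv (B.tri z y) = B.circ (B.cinv (B.star z y)) y := by
  rw [tri, B.cinv_circ', B.cinv_cinv]

lemma cinv_ov (y z : X) : B.cinv (B.ov y z) = B.circ (B.cinv (B.star z y)) z := by
  rw [ov, B.cinv_circ', B.cinv_cinv]

lemma lam_y_tri (x y : X) :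
    B.lam y (B.tri x y) = B.star (B.star (B.sinv y) x) y := by
  rw [B.tri_eq, B.lam_star, B.lam_star, B.lam_sinv, B.lam_self_cinv, B.lam_cancel,
    B.sinv_sinv]

lemma key (z y : X) :
    B.lam (B.cinv (B.star z y)) y
      = B.star (B.sinv (B.lam (B.cinv (B.star z y)) z)) (B.sinv (B.cinv (B.star z y))) := by
  set q := B.cinv (B.star z y) with hq
  have h : B.star q (B.star (B.lam q z) (B.lam q y)) = B.se := by
    rw [← B.lam_star, ← B.circ_eq_star_lam, hq, B.cinv_circ, B.se_eq_ce]
  have h2 := congrArg (B.star (B.sinv (B.lam q z)))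
    (congrArg (B.star (B.sinv q)) h)
  rwa [B.sinv_star_cancel_left, B.sinv_star_cancel_left, B.star_se] at h2

end SkewBrace

theorem skewBrace_second_exchange {X : Type*} (B : SkewBrace X) (x y z : X) :
    B.ov (B.tri x y) (B.tri z y) = B.tri (B.ov x z) (B.ov y z) := by
  set q := B.cinv (B.star z y) with hq
  have lhs : B.ov (B.tri x y) (B.tri z y)
      = B.star (B.star (B.sinv (B.lam q y)) (B.lam q x)) (B.lam q y) := by
    rw [B.ov_eq, B.cinv_tri, B.lam_circ, B.lam_y_tri, B.lam_star, B.lam_star, B.lam_sinv]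
  have rhs : B.tri (B.ov x z) (B.ov y z)
      = B.star (B.star (B.star q (B.lam q z)) (B.lam q x))
          (B.star (B.sinv (B.lam q z)) (B.sinv q)) := by
    rw [B.tri_eq, B.cinv_ov, B.lam_circ, B.ov_eq, B.lam_cancel,
      B.circ_eq_star_lam, B.sinv_star']
  rw [lhs, rhs, B.key z y, B.sinv_star']
  simp only [B.sinv_sinv, ← hq]
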